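/- Let G be a graph, c a proper k-colouring of G, and u ≠ v vertices of G. Let c_u be a colouring obtained from c by a trivial Kempe swap at u (recolouring only u), and c_v obtained from c by a trivial Kempe swap at v. Then c_u and c_v are not adjacent in the k-Kempe-recolouring graph K_k(G); i.e., one cannot move from c_u to c_v by a single Kempe swap. -/

import Mathlib

/-- A proper `k`-colouring of `G`: adjacent vertices receive distinct colours. -/
def ProperColoring {V : Type*} (G : SimpleGraph V) {k : ℕ} (c : V → Fin k) : Prop :=
  ∀ ⦃x y : V⦄, G.Adj x y → c x ≠ c y

/-- The subgraph of `G` induced by the vertices coloured `a` or `b` under `c`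
(as a graph on all of `V`). -/
def kempeGraph {V : Type*} (G : SimpleGraph V) {k : ℕ} (c : V → Fin k) (a b : Fin k) :
    SimpleGraph V where
  Adj x y := G.Adj x y ∧ (c x = a ∨ c x = b) ∧ (c y = a ∨ c y = b)
  symm := ⟨fun x y ⟨h, hx, hy⟩ => ⟨h.symm, hy, hx⟩⟩
  loopless := ⟨fun x ⟨h, _, _⟩ => G.irrefl h⟩

open Classical in
/-- The colouring obtained from `c` by the Kempe swap exchanging colours `a` and `b`
on the connected component of `v` in the subgraph induced by colours `a` and `b`. -/
noncomputable def kempeSwap {V : Type*} (G : SimpleGraph V) {k : ℕ}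
    (c : V → Fin k) (a b : Fin k) (v : V) : V → Fin k :=
  fun x => if (kempeGraph G c a b).Reachable v x
    then (if c x = a then b else if c x = b then a else c x)
    else c x

/-- `d` is obtained from `c` by a single Kempe swap that actually changes the
colouring: adjacency in the Kempe-recolouring graph. -/
def KempeStep {V : Type*} (G : SimpleGraph V) {k : ℕ} (c d : V → Fin k) : Prop :=
  c ≠ d ∧ ∃ (a b : Fin k) (v : V), d = kempeSwap G c a b v

open SimpleGraph in
lemma walk_aux {V : Type*} {G' : SimpleGraph V} {s t : V} (p : G'.Walk s t) :
    ∀ x ∈ p.support, G'.Reachable s x ∧ (x = s ∨ ∃ y, G'.Adj y x) := by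
  induction p with
  | nil =>
    intro x hx
    rw [Walk.support_nil, List.mem_singleton] at hx
    subst hx
    exact ⟨Reachable.refl _, Or.inl rfl⟩
  | @cons s w t h q ih =>
    intro x hx
    rw [Walk.support_cons, List.mem_cons] at hx
    rcases hx with rfl | hx
    · exact ⟨Reachable.refl _, Or.inl rfl⟩
    · obtain ⟨hr, ho⟩ := ih x hx
      refine ⟨h.reachable.trans hr, Or.inr ?_⟩
      rcases ho with rfl | hy
      · exact ⟨s, h⟩
      · exact hy

open SimpleGraph in
lemma walk_adj {V : Type*} {G' : SimpleGraph V} {s t : V} (hst : s ≠ t) (p : G'.Walk s t)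
    (hs : ∀ x ∈ p.support, x = s ∨ x = t) : G'.Adj s t := by
  cases p with
  | nil => exact absurd rfl hst
  | @cons _ w _ h q =>
    have hw : w = s ∨ w = t := hs w (by
      rw [Walk.support_cons]
      exact List.mem_cons_of_mem _ q.start_mem_support)
    rcases hw with rfl | rfl
    · exact absurd rfl h.ne
    · exact h

theorem stmt8 {V : Type*} (G : SimpleGraph V) (k : ℕ)
    (c : V → Fin k) (hc : ProperColoring G c)
    (u v : V) (huv : u ≠ v)
    (cu : V → Fin k) (hcu : ProperColoring G cu)
    (hdu : c u ≠ cu u ∧ ∀ x ≠ u, c x = cu x)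
    (cv : V → Fin k) (hcv : ProperColoring G cv)
    (hdv : c v ≠ cv v ∧ ∀ x ≠ v, c x = cv x) :
    ¬ KempeStep G cu cv := by
  rintro ⟨hne, a, b, v₀, rfl⟩
  obtain ⟨hdu1, hdu2⟩ := hdu
  obtain ⟨hdv1, hdv2⟩ := hdv
  have hvu : kempeSwap G cu a b v₀ u = c u := (hdv2 u huv).symm
  have hcuv : cu v = c v := (hdu2 v huv.symm).symm
  have h1 : kempeSwap G cu a b v₀ u ≠ cu u := by rw [hvu]; exact hdu1
  have h2 : kempeSwap G cu a b v₀ v ≠ cu v := by rw [hcuv]; exact hdv1.symm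
  have hru : (kempeGraph G cu a b).Reachable v₀ u := by
    by_contra h; exact h1 (by simp [kempeSwap, h])
  have hrv : (kempeGraph G cu a b).Reachable v₀ v := by
    by_contra h; exact h2 (by simp [kempeSwap, h])
  have swapne : ∀ x, (kempeGraph G cu a b).Reachable v₀ x →
      kempeSwap G cu a b v₀ x ≠ cu x → ((cu x = a ∨ cu x = b) ∧ a ≠ b) := by
    intro x hr hx
    simp only [kempeSwap, if_pos hr] at hx
    split_ifs at hx with hA hB
    · exact ⟨Or.inl hA, fun h => hx (by rw [hA, ← h])⟩
    · exact ⟨Or.inr hB, fun h => hx (by rw [hB, h])⟩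
    · exact absurd rfl hx
  obtain ⟨hu_ab, hab⟩ := swapne u hru h1
  obtain ⟨hv_ab, -⟩ := swapne v hrv h2
  have hfix : ∀ x, x ≠ u → x ≠ v → (kempeGraph G cu a b).Reachable v₀ x →
      ¬(cu x = a ∨ cu x = b) := by
    intro x hxu hxv hr hor
    have hfx : kempeSwap G cu a b v₀ x = cu x := (hdv2 x hxv).symm.trans (hdu2 x hxu)
    simp only [kempeSwap, if_pos hr] at hfx
    split_ifs at hfx with hA hB
    · exact hab (hfx.trans hA).symm
    · exact hab (hfx.trans hB)
    · exact hB (hor.resolve_left hA)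
  obtain ⟨p⟩ := hru.symm.trans hrv
  have hsupp : ∀ x ∈ p.support, x = u ∨ x = v := by
    intro x hx
    obtain ⟨hr, ho⟩ := walk_aux p x hx
    rcases ho with rfl | ⟨y, hy⟩
    · exact Or.inl rfl
    · by_contra hcon
      push_neg at hcon
      exact hfix x hcon.1 hcon.2 (hru.trans hr) hy.2.2
  obtain ⟨hGuv, -, -⟩ := walk_adj huv p hsupp
  have hne2 : cu u ≠ cu v := hcu hGuv
  have hswap : kempeSwap G cu a b v₀ u = cu v := by
    rcases hu_ab with hA | hB
    · have hvB : cu v = b := hv_ab.resolve_left (fun h => hne2 (hA.trans h.symm))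
      simp [kempeSwap, hru, hA, hvB]
    · have hA : cu u ≠ a := fun h => hab (h.symm.trans hB)
      have hvA : cu v = a := hv_ab.resolve_right (fun h => hne2 (hB.trans h.symm))
      simp [kempeSwap, hru, hA, hB, hvA]
  exact hc hGuv (hvu.symm.trans (hswap.trans hcuv))
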